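/- Let R be a ring, let D be a category admitting all small colimits, let F, G : ModuleCat R ⥤ D be functors preserving all small colimits, and let μ : F ⟶ G be a natural transformation such that the component μ_R at the free module R of rank one is an isomorphism. Then μ is a natural isomorphism, i.e., μ_M is an isomorphism for every R-module M. -/

import Mathlib

/-!
STATEMENT 8: Let `R` be a ring, `D` a category with all small colimits, and
`F, G : ModuleCat R ⥤ D` colimit-preserving functors. If a natural transformation
`μ : F ⟶ G` has an isomorphism as its component at the free module `R` of rank one,
then every component of `μ` is an isomorphism.
-/

open CategoryTheory Limits DirectSum

section Aux

universe u' v' u₂ v₂ u₃ v₃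

variable {C : Type u₂} [Category.{v₂} C] {D : Type u₃} [Category.{v₃} D]
  {F G : C ⥤ D} (μ : F ⟶ G)

/-- Transport `IsIso` of a component along an isomorphism of objects. -/
lemma aux_isIso_app_of_iso {M N : C} (e : M ≅ N) (hM : IsIso (μ.app M)) :
    IsIso (μ.app N) := by
  have : μ.app N = F.map e.inv ≫ μ.app M ≫ G.map e.hom := by
    rw [← μ.naturality e.hom, ← Category.assoc, ← F.map_comp, e.inv_hom_id, F.map_id,
      Category.id_comp]
  rw [this]
  infer_instance

/-- If `c` is a colimit cocone, both functors preserve it, and `μ` is an isomorphism on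
each object of the diagram, then `μ` is an isomorphism at the cocone point. -/
lemma aux_isIso_app_of_isColimit {J : Type u'} [Category.{v'} J] (K : J ⥤ C)
    (c : Cocone K) (hc : IsColimit c)
    [PreservesColimit K F] [PreservesColimit K G]
    (hj : ∀ j, IsIso (μ.app (K.obj j))) : IsIso (μ.app c.pt) := by
  let e : K ⋙ F ≅ K ⋙ G :=
    NatIso.ofComponents (fun j => asIso (μ.app (K.obj j))) (fun f => μ.naturality _)
  let hF := isColimitOfPreserves F hc
  let hG := isColimitOfPreserves G hc
  have heq : μ.app c.pt = (IsColimit.coconePointsIsoOfNatIso hF hG e).hom := by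
    apply hF.hom_ext
    intro j
    rw [IsColimit.comp_coconePointsIsoOfNatIso_hom]
    exact μ.naturality (c.ι.app j)
  rw [heq]
  infer_instance

end Aux

theorem natTrans_isIso_of_isIso_app_self
    {R : Type u} [Ring R] {D : Type v} [Category.{w} D]
    [HasColimitsOfSize.{u, u} D]
    (F G : ModuleCat.{u} R ⥤ D)
    [PreservesColimitsOfSize.{u, u} F] [PreservesColimitsOfSize.{u, u} G]
    (μ : F ⟶ G) (h : IsIso (μ.app (ModuleCat.of R R))) :
    ∀ M : ModuleCat.{u} R, IsIso (μ.app M) := by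
  classical
  have hF0 : PreservesColimitsOfSize.{0, 0} F :=
    preservesColimitsOfSize_shrink.{0, u, 0, u} F
  have hG0 : PreservesColimitsOfSize.{0, 0} G :=
    preservesColimitsOfSize_shrink.{0, u, 0, u} G
  -- Step 1: `μ` is an isomorphism on all free modules `σ →₀ R`.
  have hfree : ∀ σ : Type u, IsIso (μ.app (ModuleCat.of R (σ →₀ R))) := by
    intro σ
    have hds : IsIso (μ.app (ModuleCat.of R (⨁ _ : σ, R))) :=
      aux_isIso_app_of_isColimit μ
        (Discrete.functor (fun (_ : σ) => ModuleCat.of R R)) _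
        (ModuleCat.coproductCoconeIsColimit (fun (_ : σ) => ModuleCat.of R R))
        (fun j => h)
    exact aux_isIso_app_of_iso μ
      ((finsuppLEquivDirectSum R R σ).toModuleIso).symm hds
  -- Step 2: present an arbitrary module as a cokernel of a map of free modules.
  intro M
  set π : (M →₀ R) →ₗ[R] M := Finsupp.linearCombination R id with hπdef
  have hπ : Function.Surjective π := Finsupp.linearCombination_id_surjective R M
  set K : Submodule R (M →₀ R) := LinearMap.ker π with hKdef
  set q : (K →₀ R) →ₗ[R] K := Finsupp.linearCombination R id with hqdef
  have hq : Function.Surjective q := Finsupp.linearCombination_id_surjective R K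
  set f : (K →₀ R) →ₗ[R] (M →₀ R) := K.subtype ∘ₗ q with hfdef
  have hrange : LinearMap.range f = K := by
    rw [hfdef, LinearMap.range_comp, LinearMap.range_eq_top.mpr hq, Submodule.map_top,
      Submodule.range_subtype]
  set fhat : ModuleCat.of R (K →₀ R) ⟶ ModuleCat.of R (M →₀ R) := ModuleCat.ofHom f
  -- `μ` is an isomorphism on the cokernel of `fhat`.
  have hcoker : IsIso (μ.app (cokernel fhat)) := by
    refine aux_isIso_app_of_isColimit μ (parallelPair fhat 0) _
      (colimit.isColimit (parallelPair fhat 0)) ?_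
    rintro (_ | _)
    · exact hfree _
    · exact hfree _
  -- Transport along `cokernel fhat ≅ M`.
  have hrange' : LinearMap.range fhat.hom = LinearMap.ker π := by
    exact hrange.trans hKdef
  refine aux_isIso_app_of_iso μ
    ((ModuleCat.cokernelIsoRangeQuotient fhat) ≪≫
      LinearEquiv.toModuleIso
        ((Submodule.quotEquivOfEq _ _ hrange').trans (π.quotKerEquivOfSurjective hπ))) hcoker
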